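/- arXiv:1706.03109 — 3 statements merged into one kernel-verified Lean document; each statement's English description precedes it below -/
import Mathlib

section
/- For every n ≥ 4, the pseudoachromatic number of the cycle C_n equals max{k : k·⌊k/2⌋ ≤ n}. -/
open SimpleGraph

/-- A graph is planar if it has a drawing in the plane: vertices map injectively to points,
edges map to arcs between their endpoints, arc interiors avoid vertex images, and the
interiors of arcs of distinct edges are disjoint. -/
def SimpleGraph.IsPlanar {V : Type*} (G : SimpleGraph V) : Prop :=
  ∃ f : V → ℝ × ℝ, Function.Injective f ∧
    ∃ γ : ∀ ⦃u v : V⦄, G.Adj u v → _root_.Path (f u) (f v),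
      (∀ ⦃u v : V⦄ (h : G.Adj u v), Function.Injective (γ h)) ∧
      (∀ ⦃u v : V⦄ (h : G.Adj u v) (t : unitInterval), t ≠ 0 → t ≠ 1 → ∀ w, γ h t ≠ f w) ∧
      (∀ ⦃u v u' v' : V⦄ (h : G.Adj u v) (h' : G.Adj u' v'), s(u, v) ≠ s(u', v') →
        ∀ s t : unitInterval, s ≠ 0 → s ≠ 1 → γ h s ≠ γ h' t)

/-- The cone over `G`: a new vertex `none` joined to every vertex of `G`. -/
def SimpleGraph.cone {V : Type*} (G : SimpleGraph V) : SimpleGraph (Option V) :=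
  SimpleGraph.fromRel
    (fun x y => (∃ u v, x = some u ∧ y = some v ∧ G.Adj u v) ∨ x = none)

/-- A graph is outerplanar iff the cone over it is planar. -/
def SimpleGraph.IsOuterplanar {V : Type*} (G : SimpleGraph V) : Prop :=
  G.cone.IsPlanar

/-- A complete `k`-coloring: surjective, and every pair of distinct colors appears on an edge. -/
def SimpleGraph.IsCompleteColoring {V : Type*} {k : ℕ} (G : SimpleGraph V)
    (c : V → Fin k) : Prop :=
  Function.Surjective c ∧
    ∀ i j : Fin k, i ≠ j → ∃ u v, G.Adj u v ∧ c u = i ∧ c v = j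

/-- A proper coloring: adjacent vertices receive distinct colors. -/
def SimpleGraph.IsProperColoring {V : Type*} {k : ℕ} (G : SimpleGraph V)
    (c : V → Fin k) : Prop :=
  ∀ ⦃u v : V⦄, G.Adj u v → c u ≠ c v

/-- The pseudoachromatic number: the largest `k` admitting a complete `k`-coloring. -/
noncomputable def SimpleGraph.pseudoachromatic {V : Type*} (G : SimpleGraph V) : ℕ :=
  sSup {k | ∃ c : V → Fin k, G.IsCompleteColoring c}

/-- The achromatic number: the largest `k` admitting a proper complete `k`-coloring. -/
noncomputable def SimpleGraph.achromatic {V : Type*} (G : SimpleGraph V) : ℕ :=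
  sSup {k | ∃ c : V → Fin k, G.IsProperColoring c ∧ G.IsCompleteColoring c}

/-- The chromatic number: the least `k` admitting a proper `k`-coloring. -/
noncomputable def SimpleGraph.chromNum {V : Type*} (G : SimpleGraph V) : ℕ :=
  sInf {k | ∃ c : V → Fin k, G.IsProperColoring c}

/-- The thickness: the least number of planar subgraphs whose union is `G`. -/
noncomputable def SimpleGraph.thickness {V : Type*} (G : SimpleGraph V) : ℕ :=
  sInf {k | ∃ f : Fin k → SimpleGraph V, (∀ i, (f i).IsPlanar) ∧ (⨆ i, f i) = G}

/-- The outerthickness: the least number of outerplanar subgraphs whose union is `G`. -/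
noncomputable def SimpleGraph.outerthickness {V : Type*} (G : SimpleGraph V) : ℕ :=
  sInf {k | ∃ f : Fin k → SimpleGraph V, (∀ i, (f i).IsOuterplanar) ∧ (⨆ i, f i) = G}

/-- The 4-girth-thickness: the least number of planar subgraphs of girth at least 4
whose union is `G`. -/
noncomputable def SimpleGraph.girth4Thickness {V : Type*} (G : SimpleGraph V) : ℕ :=
  sInf {k | ∃ f : Fin k → SimpleGraph V,
    (∀ i, (f i).IsPlanar ∧ 4 ≤ (f i).egirth) ∧ (⨆ i, f i) = G}
section PseudoachromaticCycle

private def pairMem (l : List ℕ) (a b : ℕ) : Prop := ∃ t₁ t₂, l = t₁ ++ a :: b :: t₂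

private lemma pairMem_head (a b : ℕ) (l : List ℕ) : pairMem (a :: b :: l) a b := ⟨[], l, rfl⟩

private lemma pairMem_cons {l : List ℕ} {a b : ℕ} (c : ℕ) (h : pairMem l a b) :
    pairMem (c :: l) a b := by
  obtain ⟨t₁, t₂, rfl⟩ := h; exact ⟨c :: t₁, t₂, rfl⟩

private lemma pairMem_append_right {l₂ : List ℕ} {a b : ℕ} (l₁ : List ℕ) (h : pairMem l₂ a b) :
    pairMem (l₁ ++ l₂) a b := by
  induction l₁ with
  | nil => exact h
  | cons c t ih => exact pairMem_cons c ih

private lemma pairMem_append_left {l₁ : List ℕ} {a b : ℕ} (l₂ : List ℕ) (h : pairMem l₁ a b) :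
    pairMem (l₁ ++ l₂) a b := by
  obtain ⟨t₁, t₂, rfl⟩ := h
  exact ⟨t₁, t₂ ++ l₂, by simp⟩

private def blkv (k j : ℕ) : ℕ := if j % 2 = 1 then k else k + 1

private def blocks (k : ℕ) : ℕ → ℕ → List ℕ
  | _, 0 => []
  | s, t+1 => s :: blkv k s :: blocks k (s+1) t

private lemma blocks_length (k s t : ℕ) : (blocks k s t).length = 2 * t := by
  induction t generalizing s with
  | zero => rfl
  | succ t ih => simp [blocks, ih]; omega

private lemma blocks_snoc (k s t : ℕ) :
    blocks k s (t+1) = blocks k s t ++ [s + t, blkv k (s + t)] := by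
  induction t generalizing s with
  | zero => simp [blocks]
  | succ t ih =>
    have h : s + (t + 1) = (s + 1) + t := by omega
    rw [blocks, ih (s+1), h]
    simp [blocks]

private lemma mem_blocks (k s t x : ℕ) (hx : x ∈ blocks k s t) :
    (s ≤ x ∧ x < s + t) ∨ x = k ∨ x = k + 1 := by
  induction t generalizing s with
  | zero => simp [blocks] at hx
  | succ t ih =>
    simp [blocks] at hx
    rcases hx with rfl | rfl | hx
    · left; omega
    · unfold blkv; split <;> simp
    · rcases ih (s+1) hx with h | h
      · left; omega
      · right; exact h

private lemma mem_blocks_self (k s t j : ℕ) (h1 : s ≤ j) (h2 : j < s + t) :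
    j ∈ blocks k s t := by
  induction t generalizing s with
  | zero => omega
  | succ t ih =>
    simp [blocks]
    rcases Nat.eq_or_lt_of_le h1 with rfl | h
    · left; rfl
    · right; right; exact ih (s+1) h (by omega)

private lemma blocks_pair1 (k s t j : ℕ) (h1 : s ≤ j) (h2 : j < s + t) :
    pairMem (blocks k s t) j (blkv k j) := by
  induction t generalizing s with
  | zero => omega
  | succ t ih =>
    rcases Nat.eq_or_lt_of_le h1 with rfl | h
    · exact pairMem_head _ _ _
    · exact pairMem_cons _ (pairMem_cons _ (ih (s+1) h (by omega)))

private lemma blocks_pair2 (k s t j : ℕ) (h1 : s ≤ j) (h2 : j + 1 < s + t) :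
    pairMem (blocks k s t) (blkv k j) (j+1) := by
  induction t generalizing s with
  | zero => omega
  | succ t ih =>
    rcases Nat.eq_or_lt_of_le h1 with rfl | h
    · -- blocks k s (t+1) = s :: blkv k s :: blocks k (s+1) t, and blocks k (s+1) t starts with s+1
      have ht : t ≠ 0 := by omega
      obtain ⟨t', rfl⟩ := Nat.exists_eq_succ_of_ne_zero ht
      exact pairMem_cons _ (pairMem_head _ _ _)
    · exact pairMem_cons _ (pairMem_cons _ (ih (s+1) h (by omega)))
private def cyclMem (l : List ℕ) (a b : ℕ) : Prop := pairMem l a b ∨ ∃ t, l = b :: (t ++ [a])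

private def GoodL (k : ℕ) (l : List ℕ) : Prop :=
  (∃ rest, l = 0 :: rest) ∧ (∀ x ∈ l, x < k) ∧ (∀ c, c < k → c ∈ l) ∧
  (∀ a b, a < k → b < k → a ≠ b → cyclMem l a b ∨ cyclMem l b a)

private def tpL (k : ℕ) : List ℕ := if k % 2 = 1 then [k] else [k+1, k]

private def stepL (k : ℕ) (l : List ℕ) : List ℕ :=
  0 :: (k+1) :: (blocks k 1 (k-1) ++ (tpL k ++ l))

private lemma stepL_length (k : ℕ) (l : List ℕ) (hk : 2 ≤ k) :
    (stepL k l).length = l.length + (2 * k + 1 + (1 - k % 2)) := by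
  simp [stepL, tpL, blocks_length]
  rcases Nat.mod_two_eq_zero_or_one k with h | h
  · rw [if_neg (by omega : ¬ k % 2 = 1)]
    simp; omega
  · rw [if_pos h]
    simp; omega

private lemma goodL_step (k : ℕ) (l : List ℕ) (hk : 2 ≤ k) (h : GoodL k l) :
    GoodL (k+2) (stepL k l) := by
  obtain ⟨⟨rest, hrest⟩, hbd, hmem, hcov⟩ := h
  have liftB : ∀ a b, pairMem (blocks k 1 (k-1)) a b → pairMem (stepL k l) a b := fun a b hab =>
    pairMem_cons _ (pairMem_cons _ (pairMem_append_left _ hab))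
  have liftL : ∀ a b, pairMem l a b → pairMem (stepL k l) a b := fun a b hab =>
    pairMem_cons _ (pairMem_cons _ (pairMem_append_right _ (pairMem_append_right _ hab)))
  have hBsnoc : blocks k 1 (k-1) = blocks k 1 (k-2) ++ [k-1, blkv k (k-1)] := by
    rw [show k - 1 = (k-2) + 1 by omega]
    have h3 := blocks_snoc k 1 (k-2)
    rwa [show 1 + (k-2) = (k-2) + 1 by omega] at h3
  have hjunct : ∀ a b, pairMem ([k-1, blkv k (k-1)] ++ (tpL k ++ l)) a b →
      pairMem (stepL k l) a b := by
    intro a b hab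
    unfold stepL
    apply pairMem_cons; apply pairMem_cons
    rw [hBsnoc, List.append_assoc]
    exact pairMem_append_right _ hab
  have Hx0 : pairMem (stepL k l) k 0 := by
    apply hjunct
    rcases Nat.mod_two_eq_zero_or_one k with hpar | hpar
    · have h1 : blkv k (k-1) = k := by unfold blkv; rw [if_pos (by omega)]
      have h2 : tpL k = [k+1, k] := by unfold tpL; rw [if_neg (by omega)]
      rw [h1, h2, hrest]
      exact ⟨[k-1, k, k+1], rest, rfl⟩
    · have h1 : blkv k (k-1) = k + 1 := by unfold blkv; rw [if_neg (by omega)]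
      have h2 : tpL k = [k] := by unfold tpL; rw [if_pos hpar]
      rw [h1, h2, hrest]
      exact ⟨[k-1, k+1], rest, rfl⟩
  have Hyx : pairMem (stepL k l) (k+1) k := by
    apply hjunct
    rcases Nat.mod_two_eq_zero_or_one k with hpar | hpar
    · have h1 : blkv k (k-1) = k := by unfold blkv; rw [if_pos (by omega)]
      have h2 : tpL k = [k+1, k] := by unfold tpL; rw [if_neg (by omega)]
      rw [h1, h2, hrest]
      exact ⟨[k-1, k], 0 :: rest, rfl⟩
    · have h1 : blkv k (k-1) = k + 1 := by unfold blkv; rw [if_neg (by omega)]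
      have h2 : tpL k = [k] := by unfold tpL; rw [if_pos hpar]
      rw [h1, h2, hrest]
      exact ⟨[k-1], 0 :: rest, rfl⟩
  have H1 : ∀ j, j < k → pairMem (stepL k l) j k ∨ pairMem (stepL k l) k j := by
    intro j hj
    rcases Nat.eq_zero_or_pos j with rfl | hj0
    · right; exact Hx0
    rcases Nat.mod_two_eq_zero_or_one j with hpar | hpar
    · right
      have hp := blocks_pair2 k 1 (k-1) (j-1) (by omega) (by omega)
      have e1 : blkv k (j-1) = k := by unfold blkv; rw [if_pos (by omega)]
      have e2 : j - 1 + 1 = j := by omega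
      rw [e1, e2] at hp
      exact liftB _ _ hp
    · left
      have hp := blocks_pair1 k 1 (k-1) j (by omega) (by omega)
      have e1 : blkv k j = k := by unfold blkv; rw [if_pos hpar]
      rw [e1] at hp
      exact liftB _ _ hp
  have H2 : ∀ j, j < k → pairMem (stepL k l) j (k+1) ∨ pairMem (stepL k l) (k+1) j := by
    intro j hj
    rcases Nat.eq_zero_or_pos j with rfl | hj0
    · left; exact ⟨[], _, rfl⟩
    rcases Nat.mod_two_eq_zero_or_one j with hpar | hpar
    · left
      have hp := blocks_pair1 k 1 (k-1) j (by omega) (by omega)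
      have e1 : blkv k j = k + 1 := by unfold blkv; rw [if_neg (by omega)]
      rw [e1] at hp
      exact liftB _ _ hp
    · rcases Nat.eq_or_lt_of_le hj0 with h1 | h1
      · right
        have hBhead : blocks k 1 (k-1) = 1 :: blkv k 1 :: blocks k 2 (k-2) := by
          have h2 : k - 1 = (k-2) + 1 := by omega
          rw [h2, blocks]
        rw [← h1]
        exact ⟨[0], blkv k 1 :: (blocks k 2 (k-2) ++ (tpL k ++ l)), by rw [stepL, hBhead]; simp⟩
      · right
        have hp := blocks_pair2 k 1 (k-1) (j-1) (by omega) (by omega)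
        have e1 : blkv k (j-1) = k + 1 := by unfold blkv; rw [if_neg (by omega)]
        have e2 : j - 1 + 1 = j := by omega
        rw [e1, e2] at hp
        exact liftB _ _ hp
  have old : ∀ a b, a < k → b < k → a ≠ b →
      cyclMem (stepL k l) a b ∨ cyclMem (stepL k l) b a := by
    intro a b ha hb hab
    rcases hcov a b ha hb hab with h | h <;> [left; right] <;>
    · rcases h with h | ⟨t, ht⟩
      · exact Or.inl (liftL _ _ h)
      · right
        rw [hrest] at ht
        injection ht with hb0 hr
        refine ⟨(k+1) :: (blocks k 1 (k-1) ++ (tpL k ++ 0 :: t)), ?_⟩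
        rw [← hb0, hrest, hr]
        simp [stepL]
  refine ⟨⟨_, rfl⟩, ?_, ?_, ?_⟩
  · intro x hx
    simp [stepL] at hx
    rcases hx with rfl | rfl | hx | hx | hx
    · omega
    · omega
    · rcases mem_blocks _ _ _ _ hx with h | h | h <;> omega
    · unfold tpL at hx
      split at hx <;> simp at hx <;> omega
    · exact lt_of_lt_of_le (hbd x hx) (by omega)
  · intro c hc
    simp only [stepL, List.mem_cons, List.mem_append]
    rcases (show c = 0 ∨ c = k + 1 ∨ c = k ∨ (c < k ∧ 0 < c) by omega) with rfl | rfl | rfl | hc'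
    · left; rfl
    · right; left; rfl
    · right; right; right; left
      unfold tpL; split <;> simp
    · right; right; right; right
      exact hmem c hc'.1
  · intro a b ha hb hab
    rcases (show (a < k ∧ b < k) ∨ (a = k ∧ b < k) ∨ (a = k+1 ∧ b < k) ∨ (b = k ∧ a < k) ∨
        (b = k+1 ∧ a < k) ∨ (a = k ∧ b = k+1) ∨ (a = k+1 ∧ b = k) by omega) with
      ⟨h1,h2⟩|⟨rfl,h2⟩|⟨rfl,h2⟩|⟨rfl,h2⟩|⟨rfl,h2⟩|⟨rfl,rfl⟩|⟨rfl,rfl⟩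
    · exact old a b h1 h2 hab
    · rcases H1 b h2 with h | h
      · exact Or.inr (Or.inl h)
      · exact Or.inl (Or.inl h)
    · rcases H2 b h2 with h | h
      · exact Or.inr (Or.inl h)
      · exact Or.inl (Or.inl h)
    · rcases H1 a h2 with h | h
      · exact Or.inl (Or.inl h)
      · exact Or.inr (Or.inl h)
    · rcases H2 a h2 with h | h
      · exact Or.inl (Or.inl h)
      · exact Or.inr (Or.inl h)
    · exact Or.inr (Or.inl Hyx)
    · exact Or.inl (Or.inl Hyx)
private lemma partA (n k : ℕ) (hn : 2 ≤ n) (c : Fin n → Fin k)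
    (h : (cycleGraph n).IsCompleteColoring c) : k * (k / 2) ≤ n := by
  classical
  haveI : NeZero n := ⟨by omega⟩
  obtain ⟨hsurj, hpairs⟩ := h
  have key : ∀ i : Fin k, k / 2 ≤ (Finset.univ.filter fun v => c v = i).card := by
    intro i
    suffices hsuff : k - 1 ≤ 2 * (Finset.univ.filter fun v => c v = i).card by omega
    have hF : ∀ j : Fin k, j ≠ i → ∃ u v : Fin n,
        (cycleGraph n).Adj u v ∧ c u = i ∧ c v = j := by
      intro j hj
      exact hpairs i j (Ne.symm hj)
    choose U V hadj hci hcj using hF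
    set F : Fin k → Fin n × Bool := fun j =>
      if hj : j ≠ i then (U j hj, decide ((V j hj - U j hj).val = 1))
      else (⟨0, by omega⟩, true) with hFdef
    have hcard := Finset.card_le_card_of_injOn F
      (s := Finset.univ.erase i)
      (t := (Finset.univ.filter fun v => c v = i) ×ˢ Finset.univ)
      ?_ ?_
    · have e1 : (Finset.univ.erase i).card = k - 1 := by
        rw [Finset.card_erase_of_mem (Finset.mem_univ i)]
        simp
      have e2 : ((Finset.univ.filter fun v => c v = i) ×ˢ (Finset.univ : Finset Bool)).card
          = (Finset.univ.filter fun v => c v = i).card * 2 := by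
        rw [Finset.card_product]
        simp
      omega
    · intro j hj
      have hji : j ≠ i := Finset.ne_of_mem_erase hj
      rw [Finset.mem_coe, Finset.mem_product]
      refine ⟨?_, Finset.mem_univ _⟩
      simp only [hFdef, dif_pos hji]
      simp [hci j hji]
    · intro j₁ hj₁ j₂ hj₂ heq
      have hji₁ : j₁ ≠ i := Finset.ne_of_mem_erase hj₁
      have hji₂ : j₂ ≠ i := Finset.ne_of_mem_erase hj₂
      simp only [hFdef, dif_pos hji₁, dif_pos hji₂, Prod.mk.injEq] at heq
      obtain ⟨hu, hb⟩ := heq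
      have hadj₁ := (cycleGraph_adj').mp (hadj j₁ hji₁)
      have hadj₂ := (cycleGraph_adj').mp (hadj j₂ hji₂)
      have hvv : V j₁ hji₁ = V j₂ hji₂ := by
        rw [decide_eq_decide] at hb
        by_cases hc : (V j₁ hji₁ - U j₁ hji₁).val = 1
        · have hc₂ : (V j₂ hji₂ - U j₂ hji₂).val = 1 := hb.mp hc
          have hss : V j₁ hji₁ - U j₁ hji₁ = V j₂ hji₂ - U j₂ hji₂ := Fin.ext (by rw [hc, hc₂])
          rw [hu] at hss
          exact sub_left_injective hss
        · have hc₂ : ¬ (V j₂ hji₂ - U j₂ hji₂).val = 1 := fun hh => hc (hb.mpr hh)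
          have h1 : (U j₁ hji₁ - V j₁ hji₁).val = 1 := by tauto
          have h2 : (U j₂ hji₂ - V j₂ hji₂).val = 1 := by tauto
          have hss : U j₁ hji₁ - V j₁ hji₁ = U j₂ hji₂ - V j₂ hji₂ := Fin.ext (by rw [h1, h2])
          rw [hu] at hss
          exact sub_right_injective hss
      rw [← hcj j₁ hji₁, ← hcj j₂ hji₂, hvv]
  have hsum : n = ∑ i : Fin k, (Finset.univ.filter fun v => c v = i).card := by
    have := Finset.card_eq_sum_card_fiberwise
      (f := c) (s := Finset.univ) (t := Finset.univ) (fun v _ => Finset.mem_univ (c v))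
    simpa using this
  calc k * (k / 2) = ∑ _i : Fin k, k / 2 := by simp [Finset.sum_const, mul_comm]
    _ ≤ ∑ i : Fin k, (Finset.univ.filter fun v => c v = i).card := Finset.sum_le_sum fun i _ => key i
    _ = n := hsum.symm
private lemma getD_decomp (t₁ t₂ : List ℕ) (a b : ℕ) :
    (t₁ ++ a :: b :: t₂).getD t₁.length 0 = a ∧
    (t₁ ++ a :: b :: t₂).getD (t₁.length + 1) 0 = b := by
  induction t₁ with
  | nil => exact ⟨rfl, rfl⟩
  | cons c t ih => simpa using ih

private lemma getD_last (t : List ℕ) (a : ℕ) : (t ++ [a]).getD t.length 0 = a := by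
  induction t with
  | nil => rfl
  | cons c t ih => simpa using ih

private lemma getD_mem (l : List ℕ) (i : ℕ) (h : i < l.length) : l.getD i 0 ∈ l := by
  have : l.getD i 0 = l[i]'h := by
    simp [List.getD_eq_getElem?_getD, List.getElem?_eq_getElem h]
  rw [this]
  exact List.getElem_mem h

private lemma adj_mod (n : ℕ) (hn : 2 ≤ n) (p : ℕ) (hp : p < n) :
    (cycleGraph n).Adj ⟨p, hp⟩ ⟨(p+1) % n, Nat.mod_lt _ (by omega)⟩ := by
  rw [cycleGraph_adj']
  right
  rw [Fin.sub_def]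
  simp only
  rcases Nat.lt_or_ge (p+1) n with h | h
  · rw [Nat.mod_eq_of_lt h]
    have : n - p + (p + 1) = n + 1 := by omega
    rw [this]
    rw [Nat.add_mod_left]
    exact Nat.mod_eq_of_lt (by omega)
  · have hpn : p + 1 = n := by omega
    rw [hpn, Nat.mod_self]
    have : n - p = 1 := by omega
    rw [this]
    simp
    exact Nat.mod_eq_of_lt (by omega)

private lemma coloring_of_goodL (n k : ℕ) (hn : 2 ≤ n) (l : List ℕ)
    (h : GoodL k l) (hlen : l.length = n) :
    ∃ c : Fin n → Fin k, (cycleGraph n).IsCompleteColoring c := by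
  obtain ⟨⟨rest, hrest⟩, hbd, hmem, hcov⟩ := h
  have hb : ∀ i : Fin n, l.getD i.val 0 < k := fun i =>
    hbd _ (getD_mem l i.val (by rw [hlen]; exact i.isLt))
  refine ⟨fun i => ⟨l.getD i.val 0, hb i⟩, ?_, ?_⟩
  · intro i
    obtain ⟨p, hp, hpv⟩ := List.getElem_of_mem (hmem i.val i.isLt)
    refine ⟨⟨p, hlen ▸ hp⟩, ?_⟩
    apply Fin.ext
    simp only
    rw [List.getD_eq_getElem?_getD, List.getElem?_eq_getElem hp]
    simpa using hpv
  · intro i j hij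
    have key : ∀ a b : Fin k, cyclMem l a.val b.val →
        ∃ u v, (cycleGraph n).Adj u v ∧
          (⟨l.getD u.val 0, hb u⟩ : Fin k) = a ∧ (⟨l.getD v.val 0, hb v⟩ : Fin k) = b := by
      intro a b hc
      rcases hc with ⟨t₁, t₂, hdec⟩ | ⟨t, hdec⟩
      · have hlt : t₁.length + 1 < n := by
          rw [← hlen, hdec]; simp only [List.length_append, List.length_cons]; omega
        refine ⟨⟨t₁.length, by omega⟩, ⟨(t₁.length + 1) % n, Nat.mod_lt _ (by omega)⟩,
          adj_mod n hn _ _, ?_, ?_⟩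
        · apply Fin.ext
          simp only
          rw [hdec]
          exact (getD_decomp t₁ t₂ a.val b.val).1
        · apply Fin.ext
          simp only
          rw [Nat.mod_eq_of_lt hlt, hdec]
          exact (getD_decomp t₁ t₂ a.val b.val).2
      · -- l = b :: (t ++ [a]) : wrap pair from last to head
        have hlast : t.length + 1 < n := by rw [← hlen, hdec]; simp only [List.length_append, List.length_cons, List.length_nil]; omega
        refine ⟨⟨t.length + 1, hlast⟩, ⟨(t.length + 1 + 1) % n, Nat.mod_lt _ (by omega)⟩,
          adj_mod n hn _ _, ?_, ?_⟩
        · apply Fin.ext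
          simp only
          rw [hdec, List.getD_cons_succ, getD_last]
        · apply Fin.ext
          simp only
          have : t.length + 1 + 1 = n := by rw [← hlen, hdec]; simp only [List.length_append, List.length_cons, List.length_nil]
          rw [this, Nat.mod_self, hdec]
          rfl
    rcases hcov i.val j.val i.isLt j.isLt (fun hh => hij (Fin.ext hh)) with hc | hc
    · exact key i j hc
    · obtain ⟨u, v, h1, h2, h3⟩ := key j i hc
      exact ⟨v, u, h1.symm, h3, h2⟩
private lemma pairMem_cons' {l : List ℕ} {a b : ℕ} (c : ℕ) (h : pairMem l a b) :
    pairMem (c :: l) a b := by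
  obtain ⟨t₁, t₂, rfl⟩ := h; exact ⟨c :: t₁, t₂, rfl⟩

private lemma goodL_two : GoodL 2 [0, 1] := by
  refine ⟨⟨[1], rfl⟩, by decide, by decide, ?_⟩
  intro a b ha hb hab
  interval_cases a <;> interval_cases b <;>
    first
      | omega
      | exact Or.inl (Or.inl ⟨[], [], rfl⟩)
      | exact Or.inr (Or.inl ⟨[], [], rfl⟩)

private lemma goodL_three : GoodL 3 [0, 1, 2] := by
  refine ⟨⟨[1, 2], rfl⟩, by decide, by decide, ?_⟩
  intro a b ha hb hab
  interval_cases a <;> interval_cases b <;>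
    first
      | omega
      | exact Or.inl (Or.inl ⟨[], [2], rfl⟩)
      | exact Or.inr (Or.inl ⟨[], [2], rfl⟩)
      | exact Or.inl (Or.inl ⟨[0], [], rfl⟩)
      | exact Or.inr (Or.inl ⟨[0], [], rfl⟩)
      | exact Or.inr (Or.inr ⟨[1], rfl⟩)
      | exact Or.inl (Or.inr ⟨[1], rfl⟩)

private lemma lenstep (k : ℕ) (hk : 2 ≤ k) :
    k * (k / 2) + (2 * k + 1 + (1 - k % 2)) = (k + 2) * ((k + 2) / 2) := by
  rcases Nat.even_or_odd k with ⟨m, rfl⟩ | ⟨m, rfl⟩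
  · have e1 : (m + m) / 2 = m := by omega
    have e2 : (m + m + 2) / 2 = m + 1 := by omega
    have e3 : (m + m) % 2 = 0 := by omega
    rw [e1, e2, e3]
    ring
  · have e1 : (2 * m + 1) / 2 = m := by omega
    have e2 : (2 * m + 1 + 2) / 2 = m + 1 := by omega
    have e3 : (2 * m + 1) % 2 = 1 := by omega
    rw [e1, e2, e3]
    ring

private lemma exL : ∀ k, 2 ≤ k → ∃ l, GoodL k l ∧ l.length = k * (k / 2) := by
  intro k
  induction k using Nat.strong_induction_on with
  | _ k ih =>
    intro hk
    match k, hk with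
    | 2, _ => exact ⟨[0, 1], goodL_two, rfl⟩
    | 3, _ => exact ⟨[0, 1, 2], goodL_three, rfl⟩
    | (j+4), _ =>
      obtain ⟨l, hl, hlen⟩ := ih (j + 2) (by omega) (by omega)
      refine ⟨stepL (j+2) l, goodL_step (j+2) l (by omega) hl, ?_⟩
      rw [stepL_length (j+2) l (by omega), hlen]
      exact lenstep (j+2) (by omega)

private lemma goodL_pad (k : ℕ) (l : List ℕ) (h : GoodL k l) : GoodL k (0 :: l) := by
  obtain ⟨⟨rest, hrest⟩, hbd, hmem, hcov⟩ := h
  have h0k : 0 < k := hbd 0 (by rw [hrest]; exact List.mem_cons_self)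
  refine ⟨⟨l, rfl⟩, ?_, fun c hc => List.mem_cons_of_mem _ (hmem c hc), ?_⟩
  · intro x hx
    rcases List.mem_cons.mp hx with rfl | hx
    · exact h0k
    · exact hbd x hx
  · intro a b ha hb hab
    have lift : ∀ a b, cyclMem l a b → cyclMem (0 :: l) a b := by
      intro a b hc
      rcases hc with hp | ⟨t, ht⟩
      · exact Or.inl (pairMem_cons' 0 hp)
      · have hb0 : b = 0 := by
          rw [hrest] at ht; injection ht with h1 _; omega
        subst hb0
        exact Or.inr ⟨0 :: t, by rw [ht]; rfl⟩
    rcases hcov a b ha hb hab with hc | hc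
    · exact Or.inl (lift _ _ hc)
    · exact Or.inr (lift _ _ hc)

private lemma goodL_pad_many (k r : ℕ) (l : List ℕ) (h : GoodL k l) :
    ∃ l', GoodL k l' ∧ l'.length = l.length + r := by
  induction r with
  | zero => exact ⟨l, h, rfl⟩
  | succ r ih =>
    obtain ⟨l', hl', hlen⟩ := ih
    exact ⟨0 :: l', goodL_pad k l' hl', by simp [hlen]; omega⟩

end PseudoachromaticCycle

/-- For every `n ≥ 4`, `ψ_s(C_n) = max {k : k⌊k/2⌋ ≤ n}`. -/
theorem pseudoachromatic_cycleGraph (n : ℕ) (hn : 4 ≤ n) :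
    (SimpleGraph.cycleGraph n).pseudoachromatic = sSup {k : ℕ | k * (k / 2) ≤ n} := by
  have hn2 : 2 ≤ n := by omega
  have h12 : {k : ℕ | ∃ c : Fin n → Fin k, (cycleGraph n).IsCompleteColoring c} ⊆
      {k : ℕ | k * (k / 2) ≤ n} := by
    rintro k ⟨c, hc⟩
    exact partA n k hn2 c hc
  have h2ub : ∀ k ∈ {k : ℕ | k * (k / 2) ≤ n}, k ≤ n := by
    intro k hk
    rcases Nat.lt_or_ge k 2 with h | h
    · omega
    · calc k = k * 1 := (mul_one k).symm
        _ ≤ k * (k / 2) := Nat.mul_le_mul_left k (by omega)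
        _ ≤ n := hk
  have hbdd2 : BddAbove {k : ℕ | k * (k / 2) ≤ n} := ⟨n, h2ub⟩
  have hbdd1 : BddAbove {k : ℕ | ∃ c : Fin n → Fin k, (cycleGraph n).IsCompleteColoring c} :=
    ⟨n, fun k hk => h2ub k (h12 hk)⟩
  have h3mem : (3 : ℕ) ∈ {k : ℕ | k * (k / 2) ≤ n} := by
    simp only [Set.mem_setOf_eq]
    omega
  have hksmem := Nat.sSup_mem ⟨3, h3mem⟩ hbdd2
  have hk3 : 3 ≤ sSup {k : ℕ | k * (k / 2) ≤ n} := le_csSup hbdd2 h3mem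
  obtain ⟨l, hl, hlen⟩ := exL (sSup {k : ℕ | k * (k / 2) ≤ n}) (by omega)
  have hle : l.length ≤ n := by rw [hlen]; exact hksmem
  obtain ⟨l', hl', hlen'⟩ := goodL_pad_many _ (n - l.length) l hl
  have hlen'' : l'.length = n := by omega
  obtain ⟨c, hc⟩ := coloring_of_goodL n (sSup {k : ℕ | k * (k / 2) ≤ n}) hn2 l' hl' hlen''
  have hmem1 : sSup {k : ℕ | k * (k / 2) ≤ n} ∈
      {k : ℕ | ∃ c : Fin n → Fin k, (cycleGraph n).IsCompleteColoring c} := ⟨c, hc⟩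
  exact le_antisymm (csSup_le_csSup hbdd2 ⟨_, hmem1⟩ h12) (le_csSup hbdd1 hmem1)
end

section
/- For every n ≥ 4, the complete bipartite graph K_{2,n−2} satisfies ψ(K_{2,n−2}) = 2 and ψ_s(K_{2,n−2}) = 3. -/
open SimpleGraph

set_option maxHeartbeats 1000000 in
/-- For every `n ≥ 4`, `ψ(K_{2,n−2}) = 2` and `ψ_s(K_{2,n−2}) = 3`. -/
theorem achromatic_pseudoachromatic_completeBipartite (n : ℕ) (hn : 4 ≤ n) :
    (completeBipartiteGraph (Fin 2) (Fin (n - 2))).achromatic = 2 ∧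
      (completeBipartiteGraph (Fin 2) (Fin (n - 2))).pseudoachromatic = 3 := by
  have h2 : 2 ≤ n - 2 := by omega
  set r0 : Fin (n - 2) := ⟨0, by omega⟩ with hr0
  set r1 : Fin (n - 2) := ⟨1, by omega⟩ with hr1
  have hr01 : r1 ≠ r0 := by simp [hr0, hr1, Fin.ext_iff]
  set G := completeBipartiteGraph (Fin 2) (Fin (n - 2)) with hG
  constructor
  · -- achromatic = 2
    have hub : ∀ k ∈ {k | ∃ c : (Fin 2 ⊕ Fin (n-2)) → Fin k,
        G.IsProperColoring c ∧ G.IsCompleteColoring c}, k ≤ 2 := by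
      rintro k ⟨c, hprop, hsurj, hcomp⟩
      by_contra hk
      push_neg at hk
      have h3 : 3 ≤ k := hk
      set i0 : Fin k := ⟨0, by omega⟩
      set i1 : Fin k := ⟨1, by omega⟩
      set i2 : Fin k := ⟨2, by omega⟩
      have key : ∀ i j : Fin k, i ≠ j →
          ((∃ a, c (Sum.inl a) = i) ∧ (∃ b, c (Sum.inr b) = j)) ∨
          ((∃ a, c (Sum.inl a) = j) ∧ (∃ b, c (Sum.inr b) = i)) := by
        intro i j hij
        obtain ⟨u, v, hadj, hcu, hcv⟩ := hcomp i j hij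
        cases u with
        | inl a => cases v with
          | inl b => simp [hG] at hadj
          | inr b => exact Or.inl ⟨⟨a, hcu⟩, ⟨b, hcv⟩⟩
        | inr a => cases v with
          | inl b => exact Or.inr ⟨⟨b, hcv⟩, ⟨a, hcu⟩⟩
          | inr b => simp [hG] at hadj
      have disj : ∀ i : Fin k,
          ¬ ((∃ a, c (Sum.inl a) = i) ∧ (∃ b, c (Sum.inr b) = i)) := by
        rintro i ⟨⟨a, ha⟩, ⟨b, hb⟩⟩
        exact hprop (show G.Adj (Sum.inl a) (Sum.inr b) by simp [hG]) (ha.trans hb.symm)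
      have h01 : i0 ≠ i1 := by simp [Fin.ext_iff]
      have h12 : i1 ≠ i2 := by simp [i1, i2, Fin.ext_iff]
      have h02 : i0 ≠ i2 := by simp [Fin.ext_iff]
      have k01 := key i0 i1 h01
      have k12 := key i1 i2 h12
      have k02 := key i0 i2 h02
      have d0 := disj i0
      have d1 := disj i1
      have d2 := disj i2
      rcases k01 with ⟨hL0, hR1⟩ | ⟨hL1, hR0⟩
      · rcases k12 with ⟨hL1, hR2⟩ | ⟨hL2, hR1'⟩
        · exact d1 ⟨hL1, hR1⟩
        · rcases k02 with ⟨hL0', hR2'⟩ | ⟨hL2', hR0⟩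
          · exact d2 ⟨hL2, hR2'⟩
          · exact d0 ⟨hL0, hR0⟩
      · rcases k02 with ⟨hL0, hR2⟩ | ⟨hL2, hR0'⟩
        · exact d0 ⟨hL0, hR0⟩
        · rcases k12 with ⟨hL1', hR2⟩ | ⟨hL2', hR1⟩
          · exact d2 ⟨hL2, hR2⟩
          · exact d1 ⟨hL1, hR1⟩
    have hmem2 : 2 ∈ {k | ∃ c : (Fin 2 ⊕ Fin (n-2)) → Fin k,
        G.IsProperColoring c ∧ G.IsCompleteColoring c} := by
      refine ⟨Sum.elim (fun _ => 0) (fun _ => 1), ?_, ?_, ?_⟩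
      · intro u v hadj
        cases u <;> cases v <;> simp [hG] at hadj ⊢ <;> omega
      · intro x
        fin_cases x
        · exact ⟨Sum.inl 0, rfl⟩
        · exact ⟨Sum.inr r0, rfl⟩
      · intro i j hij
        fin_cases i <;> fin_cases j
        · exact absurd rfl hij
        · exact ⟨Sum.inl 0, Sum.inr r0, by simp [hG], rfl, rfl⟩
        · exact ⟨Sum.inr r0, Sum.inl 0, by simp [hG], rfl, rfl⟩
        · exact absurd rfl hij
    exact le_antisymm (csSup_le ⟨2, hmem2⟩ hub) (le_csSup ⟨2, hub⟩ hmem2)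
  · -- pseudoachromatic = 3
    have hub : ∀ k ∈ {k | ∃ c : (Fin 2 ⊕ Fin (n-2)) → Fin k,
        G.IsCompleteColoring c}, k ≤ 3 := by
      rintro k ⟨c, hsurj, hcomp⟩
      by_contra hk
      push_neg at hk
      have h4 : 4 ≤ k := hk
      set s : Finset (Fin k) := {c (Sum.inl 0), c (Sum.inl 1)} with hs
      have hscard : s.card ≤ 2 := by
        apply le_trans (Finset.card_insert_le _ _)
        simp
      have hcompl : 1 < sᶜ.card := by
        have := Finset.card_compl s
        have hfk : Fintype.card (Fin k) = k := Fintype.card_fin k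
        have hcard : (Finset.univ : Finset (Fin k)).card = k := by simp
        omega
      obtain ⟨i, hi, j, hj, hij⟩ := Finset.one_lt_card.mp hcompl
      rw [Finset.mem_compl] at hi hj
      obtain ⟨u, v, hadj, hcu, hcv⟩ := hcomp i j hij
      have hmem : ∀ a : Fin 2, c (Sum.inl a) ∈ s := by
        intro a; fin_cases a <;> simp [hs]
      cases u with
      | inl a => exact hi (hcu ▸ hmem a)
      | inr a => cases v with
        | inl b => exact hj (hcv ▸ hmem b)
        | inr b => simp [hG] at hadj
    have hmem3 : 3 ∈ {k | ∃ c : (Fin 2 ⊕ Fin (n-2)) → Fin 3,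
        G.IsCompleteColoring c} := by
      refine ⟨Sum.elim ![0, 1] (fun b => if b = r0 then 2 else 1), ?_, ?_⟩
      · intro x
        fin_cases x
        · exact ⟨Sum.inl 0, rfl⟩
        · exact ⟨Sum.inl 1, rfl⟩
        · exact ⟨Sum.inr r0, by simp⟩
      · intro i j hij
        fin_cases i <;> fin_cases j
        · exact absurd rfl hij
        · exact ⟨Sum.inl 0, Sum.inr r1, by simp [hG], rfl, by simp [hr01]⟩
        · exact ⟨Sum.inl 0, Sum.inr r0, by simp [hG], rfl, by simp⟩
        · exact ⟨Sum.inr r1, Sum.inl 0, by simp [hG], by simp [hr01], rfl⟩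
        · exact absurd rfl hij
        · exact ⟨Sum.inl 1, Sum.inr r0, by simp [hG], rfl, by simp⟩
        · exact ⟨Sum.inr r0, Sum.inl 0, by simp [hG], by simp, rfl⟩
        · exact ⟨Sum.inr r0, Sum.inl 1, by simp [hG], by simp, rfl⟩
        · exact absurd rfl hij
    exact le_antisymm (csSup_le ⟨3, hmem3⟩ hub) (le_csSup ⟨3, hub⟩ hmem3)
end

section
/- If G is a maximal planar graph (planar triangulation) on n vertices with a Hamiltonian cycle, then ψ_s(G) ≥ max{k : k·⌊k/2⌋ ≤ n}; and in general, if G is a maximal planar graph on n vertices containing a matching of size at least (n+4)/3, then ψ_s(G) ≥ max{k : k(k−1)/2 ≤ (n+4)/3}. -/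
open SimpleGraph

section AuxArith

private lemma modeq2 {a b n : ℕ} (h : a = b ∨ a = b + n ∨ b = a + n) : a % n = b % n := by
  rcases h with rfl | rfl | rfl <;> simp [Nat.add_mod_right]

private lemma modeq1 {a b n : ℕ} (hb : b < n) (h : a = b ∨ a = b + n) : a % n = b := by
  rcases h with rfl | rfl
  · exact Nat.mod_eq_of_lt hb
  · rw [Nat.add_mod_right]; exact Nat.mod_eq_of_lt hb

/-- zigzag offset function -/
private def eZ (m j : ℕ) : ℕ := if j = 0 then 0 else if j % 2 = 1 then (j+1)/2 else 2*m - j/2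

private def offZ (m d : ℕ) : ℕ := if d % 2 = 1 then (d-1)/2 else m + d/2

private def jjZ (m d : ℕ) : ℕ := if d % 2 = 1 then d else 2*m - d

private lemma E1 (m d x : ℕ) (hm : 1 ≤ m) (hd1 : 1 ≤ d) (hd2 : d < 2*m) (hx : x < 2*m) :
    1 ≤ jjZ m d ∧ jjZ m d < 2*m ∧
    ((x + offZ m d) % (2*m) + eZ m (jjZ m d - 1)) % (2*m) = x ∧
    ((x + offZ m d) % (2*m) + eZ m (jjZ m d)) % (2*m) = (x + d) % (2*m) := by
  refine ⟨by simp only [jjZ]; split_ifs <;> omega,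
          by simp only [jjZ]; split_ifs <;> omega, ?_, ?_⟩ <;>
  · simp only [jjZ, eZ, offZ]
    split_ifs <;>
      first
      | omega
      | (rw [Nat.mod_add_mod]
         first
         | (apply modeq1 hx; omega)
         | (apply modeq2; omega))

private lemma E2 (m d x : ℕ) (hm : 1 ≤ m) (hd1 : 1 ≤ d) (hd2 : d < 2*m) (hx : x < 2*m) :
    (((x + d) % (2*m)) + offZ m (2*m - d)) % (2*m) = (x + offZ m d + m) % (2*m) := by
  rw [Nat.mod_add_mod]
  simp only [offZ]
  split_ifs <;> (apply modeq2 ; omega)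

private lemma E3 (m x y : ℕ) (hm : 1 ≤ m) (hx : x < 2*m) (hy : y < 2*m) (hxy : x ≠ y) :
    ∃ d, 1 ≤ d ∧ d < 2*m ∧ (x + d) % (2*m) = y ∧ (y + (2*m - d)) % (2*m) = x := by
  refine ⟨if x < y then y - x else 2*m - (x - y), by split_ifs <;> omega,
    by split_ifs <;> omega, ?_, ?_⟩ <;>
  · split_ifs <;> [exact modeq1 (by omega) (by omega); exact modeq1 (by omega) (by omega)]

private lemma coreZ (m x y : ℕ) (hm : 1 ≤ m) (hx : x < 2*m) (hy : y < 2*m) (hxy : x ≠ y) :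
    ∃ i j, i < m ∧ 1 ≤ j ∧ j < 2*m ∧
      (((i + eZ m (j-1)) % (2*m) = x ∧ (i + eZ m j) % (2*m) = y) ∨
       ((i + eZ m (j-1)) % (2*m) = y ∧ (i + eZ m j) % (2*m) = x)) := by
  obtain ⟨d, hd1, hd2, hxdy, hydx⟩ := E3 m x y hm hx hy hxy
  set i0 := (x + offZ m d) % (2*m) with hi0
  have hi0lt : i0 < 2*m := Nat.mod_lt _ (by omega)
  by_cases hlt : i0 < m
  · obtain ⟨hj1, hj2, hA, hB⟩ := E1 m d x hm hd1 hd2 hx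
    exact ⟨i0, jjZ m d, hlt, hj1, hj2, Or.inl ⟨hA, by rw [hB, hxdy]⟩⟩
  · obtain ⟨hj1, hj2, hA, hB⟩ := E1 m (2*m-d) y hm (by omega) (by omega) hy
    have he2 := E2 m d x hm hd1 hd2 hx
    have hidx : (y + offZ m (2*m-d)) % (2*m) = i0 - m := by
      conv_lhs => rw [← hxdy]
      rw [he2, ← Nat.mod_add_mod, ← hi0]
      exact modeq1 (by omega) (by omega)
    rw [hidx] at hA hB
    rw [hydx] at hB
    exact ⟨i0 - m, jjZ m (2*m-d), by omega, hj1, hj2, Or.inr ⟨hA, hB⟩⟩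

/-- the color word -/
private def wordW (k t : ℕ) : ℕ :=
  if t < k/2 * k then
    (if k % 2 = 1 ∧ t % k = 0 then k - 1 else (t / k + eZ (k/2) (t % k - k % 2)) % (2*(k/2)))
  else if k % 2 = 1 then k - 1 else 0

private lemma wordW_lt (k : ℕ) (hk : 2 ≤ k) (t : ℕ) : wordW k t < k := by
  have h2 : 0 < 2*(k/2) := by omega
  have := Nat.mod_lt (t / k + eZ (k/2) (t % k - k % 2)) h2
  unfold wordW; split_ifs <;> omega

private lemma wordW_pad (k t : ℕ) (ht : k/2 * k ≤ t) :
    wordW k t = if k % 2 = 1 then k - 1 else 0 := by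
  unfold wordW; rw [if_neg (by omega)]

private lemma divmod_block (i k r : ℕ) (hr : r < k) : (i*k + r) % k = r ∧ (i*k + r) / k = i := by
  constructor
  · rw [Nat.mul_add_mod']; exact Nat.mod_eq_of_lt hr
  · rw [mul_comm, Nat.mul_add_div (by omega)]; simp [Nat.div_eq_of_lt hr]

private lemma block_lt (i k r : ℕ) (hi : i < k/2) (hr : r < k) : i*k + r < k/2 * k := by
  calc i*k + r < i*k + k := by omega
  _ = (i+1)*k := by ring
  _ ≤ k/2 * k := Nat.mul_le_mul_right _ (by omega)

private lemma wordW_eval (k i r : ℕ) (hk : 2 ≤ k) (hi : i < k/2) (hr : r < k)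
    (hr0 : ¬(k % 2 = 1 ∧ r = 0)) :
    wordW k (i*k + r) = (i + eZ (k/2) (r - k % 2)) % (2*(k/2)) := by
  obtain ⟨h1, h2⟩ := divmod_block i k r hr
  unfold wordW
  rw [if_pos (block_lt i k r hi hr), h1, h2, if_neg hr0]

private lemma wordW_eval_inf (k i : ℕ) (hk : 2 ≤ k) (hodd : k % 2 = 1) (hi : i ≤ k/2) :
    wordW k (i*k) = k - 1 := by
  rcases eq_or_lt_of_le hi with rfl | hi
  · exact (wordW_pad k _ (le_refl _)).trans (if_pos hodd)
  · obtain ⟨h1, h2⟩ := divmod_block i k 0 (by omega)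
    unfold wordW
    rw [if_pos (by simpa using block_lt i k 0 hi (by omega))]
    simp only [Nat.add_zero] at h1 h2 ⊢
    rw [h1, h2, if_pos ⟨hodd, rfl⟩]

private lemma wordW_zero (k : ℕ) (hk : 2 ≤ k) :
    wordW k 0 = if k % 2 = 1 then k - 1 else 0 := by
  by_cases hodd : k % 2 = 1
  · rw [if_pos hodd]
    have := wordW_eval_inf k 0 hk hodd (by omega)
    simpa using this
  · rw [if_neg hodd]
    have := wordW_eval k 0 0 hk (by omega) (by omega) (by omega)
    simp only [Nat.zero_mul, Nat.add_zero, Nat.zero_add] at this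
    rw [this, show (0 : ℕ) - k % 2 = 0 by omega, show eZ (k/2) 0 = 0 from rfl]
    simp

private lemma wordW_coverage (k : ℕ) (hk : 2 ≤ k) (a b : ℕ) (ha : a < k) (hb : b < k)
    (hab : a ≠ b) :
    ∃ t, t + 1 ≤ k/2 * k ∧
      ((wordW k t = a ∧ wordW k (t+1) = b) ∨ (wordW k t = b ∧ wordW k (t+1) = a)) := by
  set m := k/2 with hm
  have hm1 : 1 ≤ m := by omega
  have main : ∀ x y, x < 2*m → y < 2*m → x ≠ y →
      ∃ t, t + 1 ≤ m * k ∧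
      ((wordW k t = x ∧ wordW k (t+1) = y) ∨ (wordW k t = y ∧ wordW k (t+1) = x)) := by
    intro x y hx hy hxy
    obtain ⟨i, j, hi, hj1, hj2, hor⟩ := coreZ m x y hm1 hx hy hxy
    have hA : (i+1)*k ≤ m*k := Nat.mul_le_mul_right k (by omega)
    have hB : (i+1)*k = i*k + k := by ring
    refine ⟨i*k + (j - 1) + k % 2, by omega, ?_⟩
    have e1 : wordW k (i*k + (j - 1) + k % 2) = (i + eZ m (j-1)) % (2*m) := by
      rw [show i*k + (j-1) + k % 2 = i*k + ((j-1) + k % 2) by omega,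
        wordW_eval k i _ hk (by omega) (by omega) (by omega), ← hm,
        show (j-1) + k % 2 - k % 2 = j - 1 by omega]
    have e2 : wordW k (i*k + (j - 1) + k % 2 + 1) = (i + eZ m j) % (2*m) := by
      rw [show i*k + (j-1) + k % 2 + 1 = i*k + ((j-1) + k % 2 + 1) by omega,
        wordW_eval k i _ hk (by omega) (by omega) (by omega), ← hm,
        show (j-1) + k % 2 + 1 - k % 2 = j by omega]
    rw [e1, e2]
    exact hor
  by_cases hkodd : k % 2 = 1
  · have hinf : ∀ x, x < 2*m →
        ∃ t, t + 1 ≤ m * k ∧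
        ((wordW k t = (k-1) ∧ wordW k (t+1) = x) ∨ (wordW k t = x ∧ wordW k (t+1) = k-1)) := by
      intro x hx
      by_cases hxm : x < m
      · have hA : (x+1)*k ≤ m*k := Nat.mul_le_mul_right k (by omega)
        have hB : (x+1)*k = x*k + k := by ring
        refine ⟨x*k, by omega, Or.inl ⟨wordW_eval_inf k x hk hkodd (by omega), ?_⟩⟩
        rw [show x*k + 1 = x*k + 1 by rfl,
          wordW_eval k x 1 hk (by omega) (by omega) (by omega), ← hm,
          show 1 - k % 2 = 0 by omega]
        rw [show eZ m 0 = 0 from rfl, Nat.add_zero]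
        exact Nat.mod_eq_of_lt (by omega)
      · have hA : (x-m+1)*k ≤ m*k := Nat.mul_le_mul_right k (by omega)
        have hB : (x-m+1)*k = (x-m)*k + k := by ring
        refine ⟨(x-m)*k + (k-1), by omega, Or.inr ⟨?_, ?_⟩⟩
        · rw [wordW_eval k (x-m) (k-1) hk (by omega) (by omega) (by omega), ← hm,
            show k - 1 - k % 2 = 2*m - 1 by omega]
          simp only [eZ]
          rw [if_neg (by omega), if_pos (by omega), show (2*m-1+1)/2 = m by omega,
            show x - m + m = x by omega]
          exact Nat.mod_eq_of_lt (by omega)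
        · rw [show (x-m)*k + (k-1) + 1 = (x-m+1)*k by omega]
          exact wordW_eval_inf k (x-m+1) hk hkodd (by omega)
    rcases Nat.lt_or_ge a (2*m) with ha2 | ha2
    · rcases Nat.lt_or_ge b (2*m) with hb2 | hb2
      · exact main a b ha2 hb2 hab
      · have hb' : b = k - 1 := by omega
        obtain ⟨t, h1, h2⟩ := hinf a ha2
        exact ⟨t, h1, by rw [← hb'] at h2; tauto⟩
    · have ha' : a = k - 1 := by omega
      have hb2 : b < 2*m := by omega
      obtain ⟨t, h1, h2⟩ := hinf b hb2
      exact ⟨t, h1, by rw [← ha'] at h2; tauto⟩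
  · exact main a b (by omega) (by omega) hab

end AuxArith

section AuxWalk

private lemma getVert_eq_support_getElem' {V : Type*} {G : SimpleGraph V} {u v : V}
    (p : G.Walk u v) {i : ℕ} (h : i < p.support.length) : p.getVert i = p.support[i] := by
  induction p generalizing i with
  | nil => simp at h; subst h; simp [SimpleGraph.Walk.getVert]
  | cons ha q ih =>
    cases i with
    | zero => simp [SimpleGraph.Walk.getVert]
    | succ i =>
      simp only [SimpleGraph.Walk.support_cons, List.getElem_cons_succ,
        SimpleGraph.Walk.getVert_cons_succ]
      exact ih (by simpa [SimpleGraph.Walk.length_support] using h)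

variable {V : Type*} [Fintype V] [DecidableEq V] {G : SimpleGraph V} {v : V} {p : G.Walk v v}

private lemma ham_tail_nodup (hp : p.IsHamiltonianCycle) : p.support.tail.Nodup := by
  refine List.nodup_iff_count_le_one.2 (fun a => le_of_eq ?_)
  have := hp.isHamiltonian_tail a
  rwa [SimpleGraph.Walk.support_tail_of_not_nil p hp.isCycle.not_nil] at this

private lemma ham_getVert_inj (hp : p.IsHamiltonianCycle) {s t : ℕ}
    (hs : s < Fintype.card V) (ht : t < Fintype.card V)
    (h : p.getVert s = p.getVert t) : s = t := by
  set n := Fintype.card V with hn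
  have hlen : p.length = n := hp.length_eq
  have hsup : p.support.length = n + 1 := by rw [SimpleGraph.Walk.length_support, hlen]
  have htl : p.support.tail.length = n := by simp [hsup]
  have hnd := ham_tail_nodup hp
  have hgel : ∀ i (hi : i < n), p.getVert (i+1) = p.support.tail[i]'(by omega) := by
    intro i hi
    rw [List.getElem_tail]
    exact getVert_eq_support_getElem' p (by omega)
  have hlast : p.support.tail[n-1]'(by omega) = v := by
    have h0 : 0 < n := Fintype.card_pos_iff.2 ⟨v⟩
    rw [← hgel (n-1) (by omega), show n - 1 + 1 = n by omega, ← hlen,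
      SimpleGraph.Walk.getVert_length]
  rcases Nat.eq_zero_or_pos s with rfl | hs0
  · rcases Nat.eq_zero_or_pos t with rfl | ht0
    · rfl
    · exfalso
      rw [SimpleGraph.Walk.getVert_zero] at h
      have h1 : p.support.tail[t-1]'(by omega) = v := by
        rw [← hgel (t-1) (by omega), show t - 1 + 1 = t by omega, ← h]
      have := (List.Nodup.getElem_inj_iff hnd).1 (h1.trans hlast.symm)
      omega
  · rcases Nat.eq_zero_or_pos t with rfl | ht0
    · exfalso
      rw [SimpleGraph.Walk.getVert_zero] at h
      have h1 : p.support.tail[s-1]'(by omega) = v := by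
        rw [← hgel (s-1) (by omega), show s - 1 + 1 = s by omega, h]
      have := (List.Nodup.getElem_inj_iff hnd).1 (h1.trans hlast.symm)
      omega
    · have h1 : p.support.tail[s-1]'(by omega) = p.support.tail[t-1]'(by omega) := by
        rw [← hgel (s-1) (by omega), ← hgel (t-1) (by omega),
          show s - 1 + 1 = s by omega, show t - 1 + 1 = t by omega, h]
      have := (List.Nodup.getElem_inj_iff hnd).1 h1
      omega

private lemma ham_getVert_surj (hp : p.IsHamiltonianCycle) (u : V) :
    ∃ t, t < Fintype.card V ∧ p.getVert t = u := by
  have hlen : p.length = Fintype.card V := hp.length_eq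
  obtain ⟨t, hgv, hle⟩ := SimpleGraph.Walk.mem_support_iff_exists_getVert.1 (hp.mem_support u)
  rcases Nat.lt_or_ge t p.length with h | h
  · exact ⟨t, by omega, hgv⟩
  · have : t = p.length := by omega
    subst this
    rw [SimpleGraph.Walk.getVert_length] at hgv
    exact ⟨0, Fintype.card_pos_iff.2 ⟨v⟩, by rw [SimpleGraph.Walk.getVert_zero, hgv]⟩

end AuxWalk

section AuxColorings

private lemma one_complete_coloring {V : Type*} (G : SimpleGraph V) (v : V) :
    ∃ c : V → Fin 1, G.IsCompleteColoring c :=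
  ⟨fun _ => 0, fun _ => ⟨v, Subsingleton.elim _ _⟩,
    fun i j hij => absurd (Subsingleton.elim i j) hij⟩

private lemma exists_ne_fin {k : ℕ} (hk : 2 ≤ k) (i : Fin k) : ∃ j : Fin k, j ≠ i := by
  by_cases h : i = ⟨0, by omega⟩
  · exact ⟨⟨1, by omega⟩, by rw [h]; exact fun hc => by simpa using Fin.mk.inj_iff.1 hc⟩
  · exact ⟨⟨0, by omega⟩, fun hc => h hc.symm⟩

private lemma matching_complete_coloring {V : Type*} [Fintype V] [DecidableEq V]
    {G : SimpleGraph V} {M : G.Subgraph} (hM : M.IsMatching) {k : ℕ} (hk : 2 ≤ k)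
    (hcard : k.choose 2 ≤ M.edgeSet.ncard) :
    ∃ c : V → Fin k, G.IsCompleteColoring c := by
  classical
  haveI : Fintype ↥M.edgeSet := M.edgeSet.toFinite.fintype
  have hcardeq : M.edgeSet.ncard = Fintype.card ↥M.edgeSet := by
    rw [Set.ncard_eq_toFinset_card', Set.toFinset_card]
  have hcard' : Fintype.card {q : Sym2 (Fin k) // ¬ q.IsDiag} ≤ Fintype.card ↥M.edgeSet := by
    rw [Sym2.card_subtype_not_diag, Fintype.card_fin]
    omega
  obtain ⟨F⟩ := Function.Embedding.nonempty_of_card_le hcard'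
  have hrep : ∀ q : {q : Sym2 (Fin k) // ¬ q.IsDiag},
      ∃ z : V × V, M.Adj z.1 z.2 ∧ (F q : Sym2 V) = s(z.1, z.2) := by
    intro q
    obtain ⟨e, he⟩ := F q
    induction e with
    | _ x y => exact ⟨(x, y), (SimpleGraph.Subgraph.mem_edgeSet).1 he, rfl⟩
  choose z hzadj hzedge using hrep
  have hpair : ∀ q : {q : Sym2 (Fin k) // ¬ q.IsDiag},
      ∃ w : Fin k × Fin k, (q : Sym2 (Fin k)) = s(w.1, w.2) := by
    intro q
    obtain ⟨e, he⟩ := q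
    induction e with
    | _ x y => exact ⟨(x, y), rfl⟩
  choose w hw using hpair
  have huniq : ∀ {x y y' : V}, M.Adj x y → M.Adj x y' → y = y' := by
    intro x y y' h1 h2
    exact ((hM (M.edge_vert h1)).unique h1 h2)
  have key : ∀ (q) (x : V), (x = (z q).1 ∨ x = (z q).2) → ∀ y, M.Adj x y →
      (F q : Sym2 V) = s(x, y) := by
    intro q x hx y hxy
    rcases hx with rfl | rfl
    · rw [hzedge q, huniq (hzadj q) hxy]
    · rw [hzedge q, Sym2.eq_swap, huniq ((hzadj q).symm) hxy]
  have adjx : ∀ (q) (x : V), (x = (z q).1 ∨ x = (z q).2) → ∃ y, M.Adj x y := by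
    intro q x hx
    rcases hx with rfl | rfl
    · exact ⟨_, hzadj q⟩
    · exact ⟨_, (hzadj q).symm⟩
  have hdisj : ∀ q q' : {q : Sym2 (Fin k) // ¬ q.IsDiag}, ∀ x : V,
      (x = (z q).1 ∨ x = (z q).2) → (x = (z q').1 ∨ x = (z q').2) → q = q' := by
    intro q q' x h1 h2
    obtain ⟨y, hy⟩ := adjx q x h1
    exact F.injective (Subtype.ext ((key q x h1 y hy).trans (key q' x h2 y hy).symm))
  have hne : ∀ q : {q : Sym2 (Fin k) // ¬ q.IsDiag}, (z q).1 ≠ (z q).2 :=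
    fun q => (M.adj_sub (hzadj q)).ne
  let c : V → Fin k := fun x =>
    if h : ∃ q, x = (z q).1 ∨ x = (z q).2 then
      (if x = (z h.choose).1 then (w h.choose).1 else (w h.choose).2)
    else ⟨0, by omega⟩
  have hc1 : ∀ q, c ((z q).1) = (w q).1 := by
    intro q
    have hex : ∃ q', (z q).1 = (z q').1 ∨ (z q).1 = (z q').2 := ⟨q, Or.inl rfl⟩
    have hq : hex.choose = q := hdisj hex.choose q ((z q).1) hex.choose_spec (Or.inl rfl)
    simp only [c]
    rw [dif_pos hex, hq, if_pos rfl]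
  have hc2 : ∀ q, c ((z q).2) = (w q).2 := by
    intro q
    have hex : ∃ q', (z q).2 = (z q').1 ∨ (z q).2 = (z q').2 := ⟨q, Or.inr rfl⟩
    have hq : hex.choose = q := hdisj hex.choose q ((z q).2) hex.choose_spec (Or.inr rfl)
    simp only [c]
    rw [dif_pos hex, hq, if_neg (hne q).symm]
  have hcomp : ∀ i j : Fin k, i ≠ j → ∃ u v, G.Adj u v ∧ c u = i ∧ c v = j := by
    intro i j hij
    set q : {q : Sym2 (Fin k) // ¬ q.IsDiag} := ⟨s(i, j), by simp [hij]⟩ with hqdef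
    have hqw : s(i, j) = s((w q).1, (w q).2) := hw q
    rw [Sym2.eq_iff] at hqw
    rcases hqw with ⟨h1, h2⟩ | ⟨h1, h2⟩
    · exact ⟨(z q).1, (z q).2, M.adj_sub (hzadj q), by rw [hc1, ← h1], by rw [hc2, ← h2]⟩
    · exact ⟨(z q).2, (z q).1, (M.adj_sub (hzadj q)).symm, by rw [hc2, ← h1], by rw [hc1, ← h2]⟩
  refine ⟨c, ?_, hcomp⟩
  intro i
  obtain ⟨j, hji⟩ := exists_ne_fin hk i
  obtain ⟨u, v', _, hu, _⟩ := hcomp i j (fun h => hji (h.symm))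
  exact ⟨u, hu⟩

private lemma ham_complete_coloring {V : Type*} [Fintype V] [DecidableEq V]
    {G : SimpleGraph V} {v : V} {p : G.Walk v v} (hp : p.IsHamiltonianCycle) {k : ℕ}
    (hk : 2 ≤ k) (hkn : k * (k/2) ≤ Fintype.card V) :
    ∃ c : V → Fin k, G.IsCompleteColoring c := by
  classical
  set n := Fintype.card V with hn
  have hlen : p.length = n := hp.length_eq
  have hL : k/2 * k ≤ n := by rw [mul_comm]; exact hkn
  have h0 : 0 < n := Fintype.card_pos_iff.2 ⟨v⟩
  choose pos hposlt hposeq using ham_getVert_surj hp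
  let c : V → Fin k := fun u => ⟨wordW k (pos u), wordW_lt k hk _⟩
  have hckey : ∀ t, t ≤ n → (c (p.getVert t) : ℕ) = wordW k t := by
    intro t ht
    rcases Nat.lt_or_ge t n with h | h
    · have hpt : pos (p.getVert t) = t :=
        ham_getVert_inj hp (hposlt _) (by omega) (hposeq _)
      simp only [c]
      rw [hpt]
    · have htn : t = n := by omega
      subst htn
      have hv : p.getVert n = v := by rw [← hlen]; exact p.getVert_length
      have hp0 : pos v = 0 :=
        ham_getVert_inj hp (hposlt v) h0 (by rw [hposeq, SimpleGraph.Walk.getVert_zero])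
      simp only [c]
      rw [hv, hp0, wordW_zero k hk, wordW_pad k n (by omega)]
  have hcomp : ∀ i j : Fin k, i ≠ j → ∃ u v, G.Adj u v ∧ c u = i ∧ c v = j := by
    intro i j hij
    have hij' : (i : ℕ) ≠ (j : ℕ) := fun h => hij (Fin.ext h)
    obtain ⟨t, htL, hor⟩ := wordW_coverage k hk i j i.isLt j.isLt hij'
    have ht1 : t + 1 ≤ n := le_trans htL hL
    have hadj : G.Adj (p.getVert t) (p.getVert (t+1)) := p.adj_getVert_succ (by omega)
    have e1 := hckey t (by omega)
    have e2 := hckey (t+1) ht1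
    rcases hor with ⟨h1, h2⟩ | ⟨h1, h2⟩
    · exact ⟨p.getVert t, p.getVert (t+1), hadj,
        Fin.ext (by rw [e1, h1]), Fin.ext (by rw [e2, h2])⟩
    · exact ⟨p.getVert (t+1), p.getVert t, hadj.symm,
        Fin.ext (by rw [e2, h2]), Fin.ext (by rw [e1, h1])⟩
  refine ⟨c, ?_, hcomp⟩
  intro i
  obtain ⟨j, hji⟩ := exists_ne_fin hk i
  obtain ⟨u, v', _, hu, _⟩ := hcomp i j (fun h => hji (h.symm))
  exact ⟨u, hu⟩

private lemma le_pseudoachromatic {V : Type*} [Fintype V] {G : SimpleGraph V} {k : ℕ}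
    (h : ∃ c : V → Fin k, G.IsCompleteColoring c) : k ≤ G.pseudoachromatic := by
  refine le_csSup ⟨Fintype.card V, ?_⟩ h
  rintro k' ⟨c, hc, -⟩
  simpa using Fintype.card_le_of_surjective c hc

end AuxColorings
/-- If `G` is a maximal planar graph (a planar graph on `n` vertices with exactly `3n − 6`
edges) with a Hamiltonian cycle then `ψ_s(G) ≥ max {k : k⌊k/2⌋ ≤ n}`; and if it contains a
matching of size at least `(n+4)/3` then `ψ_s(G) ≥ max {k : k(k−1)/2 ≤ (n+4)/3}`. -/
theorem pseudoachromatic_maximal_planar_lower {V : Type*} [Fintype V] [DecidableEq V]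
    (G : SimpleGraph V) [DecidableRel G.Adj] (n : ℕ) (hn : Fintype.card V = n)
    (hplanar : G.IsPlanar) (hmax : G.edgeFinset.card = 3 * n - 6) :
    ((∃ (v : V) (p : G.Walk v v), p.IsHamiltonianCycle) →
        sSup {k : ℕ | k * (k / 2) ≤ n} ≤ G.pseudoachromatic) ∧
      ((∃ M : G.Subgraph, M.IsMatching ∧ ((n : ℚ) + 4) / 3 ≤ M.edgeSet.ncard) →
        sSup {k : ℕ | ((k : ℚ) * (k - 1)) / 2 ≤ ((n : ℚ) + 4) / 3} ≤ G.pseudoachromatic) := by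
  constructor
  · rintro ⟨v, p, hp⟩
    refine csSup_le ⟨0, by simp⟩ (fun k hk' => ?_)
    rcases Nat.lt_or_ge k 2 with h2 | h2
    · rcases Nat.eq_zero_or_pos k with rfl | h1
      · exact Nat.zero_le _
      · have hk1 : k = 1 := by omega
        subst hk1
        exact le_pseudoachromatic (one_complete_coloring G v)
    · exact le_pseudoachromatic (ham_complete_coloring hp h2 (by rw [hn]; exact hk'))
  · rintro ⟨M, hM, hMcard⟩
    have hpos : (0:ℚ) < ((n : ℚ) + 4) / 3 := by positivity
    have hMne : M.edgeSet.ncard ≠ 0 := by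
      intro h0
      rw [h0] at hMcard
      norm_num at hMcard
      linarith
    refine csSup_le ⟨0, by simp; positivity⟩ (fun k hk' => ?_)
    rcases Nat.lt_or_ge k 2 with h2 | h2
    · rcases Nat.eq_zero_or_pos k with rfl | h1
      · exact Nat.zero_le _
      · have hk1 : k = 1 := by omega
        subst hk1
        obtain ⟨e, he⟩ := Set.nonempty_of_ncard_ne_zero hMne
        obtain ⟨x, y, hxy⟩ : ∃ x y : V, M.Adj x y := by
          induction e with
          | _ x y => exact ⟨x, y, (SimpleGraph.Subgraph.mem_edgeSet).1 he⟩
        exact le_pseudoachromatic (one_complete_coloring G x)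
    · have hdvd : k.choose 2 * 2 = k * (k-1) := by
        rw [Nat.choose_two_right]
        rw [Nat.div_mul_cancel]
        have := Nat.even_mul_succ_self (k-1)
        rw [show k - 1 + 1 = k by omega] at this
        exact (by rwa [mul_comm] at this : Even (k * (k-1))).two_dvd
      have hcast : ((k.choose 2 : ℕ) : ℚ) = (k : ℚ) * ((k:ℚ) - 1) / 2 := by
        have h1 : ((k.choose 2 : ℕ) : ℚ) * 2 = ((k * (k-1) : ℕ) : ℚ) := by
          exact_mod_cast congrArg (Nat.cast : ℕ → ℚ) hdvd
        have h2 : ((k * (k-1) : ℕ) : ℚ) = (k:ℚ) * ((k:ℚ) - 1) := by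
          push_cast [Nat.cast_sub (by omega : 1 ≤ k)]
          ring
        rw [h2] at h1
        linarith
      have hle : (k.choose 2 : ℚ) ≤ (M.edgeSet.ncard : ℚ) := by
        rw [hcast]
        exact le_trans hk' hMcard
      exact le_pseudoachromatic (matching_complete_coloring hM h2 (by exact_mod_cast hle))
end
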